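/- arXiv:1905.05434 — 7 statements merged into one kernel-verified Lean document; each statement's English description precedes it below -/
import Mathlib

section
/- Let (Ω, ℙ) be a probability space and let h₀, h₁, …, h_κ be independent random variables, each exponentially distributed with rate 1, with κ ≥ 1. Let p₀λ₀ > 0 and p_iλ_i > 0 for i = 1, …, κ. Then for every γ ≥ 0, ℙ[ p₀λ₀ h₀ < γ · Σ_{i=1}^{κ} p_iλ_i h_i ] ≤ 1 − (1 + γ · (Σ_{i=1}^{κ} p_iλ_i)/(κ p₀λ₀))^{−κ}. -/
open MeasureTheory ProbabilityTheory
open scoped ENNReal NNReal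

section Aux

open Real

lemma measurable_expPDF (r : ℝ) : Measurable (exponentialPDF r) :=
  (measurable_exponentialPDFReal r).ennreal_ofReal

lemma expMeasure_eq (r : ℝ) : expMeasure r = volume.withDensity (exponentialPDF r) := rfl

/-- Lebesgue integral of `exp (-(b*x))` against the rate-1 exponential measure. -/
lemma lintegral_exp_neg_expMeasure (b : ℝ) (hb : 0 ≤ b) :
    ∫⁻ x, ENNReal.ofReal (rexp (-(b * x))) ∂(expMeasure 1)
      = ENNReal.ofReal (1 + b)⁻¹ := by
  have hb1 : (0:ℝ) < 1 + b := by linarith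
  have hm : Measurable fun x : ℝ => Real.exp (-(b * x)) :=
    (measurable_id'.const_mul b).neg.exp
  rw [expMeasure_eq, lintegral_withDensity_eq_lintegral_mul _ (measurable_expPDF 1)
      hm.ennreal_ofReal]
  have hpt : ∀ x, exponentialPDF 1 x * ENNReal.ofReal (rexp (-(b * x)))
      = ENNReal.ofReal (1 + b)⁻¹ * exponentialPDF (1 + b) x := by
    intro x
    rcases lt_or_ge x 0 with hx | hx
    · rw [exponentialPDF_of_neg hx, exponentialPDF_of_neg hx, zero_mul, mul_zero]
    · rw [exponentialPDF_of_nonneg hx, exponentialPDF_of_nonneg hx,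
        ← ENNReal.ofReal_mul (by positivity), ← ENNReal.ofReal_mul (by positivity)]
      congr 1
      rw [one_mul, ← Real.exp_add, show -(1*x) + -(b * x) = -((1+b) * x) by ring]
      field_simp
  simp only [Pi.mul_apply, hpt]
  rw [lintegral_const_mul _ (measurable_expPDF (1 + b)),
    lintegral_exponentialPDF_eq_one hb1, mul_one]

/-- Bochner integral of `exp (-(b*x))` against the rate-1 exponential measure. -/
lemma integral_exp_neg_expMeasure (b : ℝ) (hb : 0 ≤ b) :
    ∫ x, rexp (-(b * x)) ∂(expMeasure 1) = (1 + b)⁻¹ := by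
  have hb1 : (0:ℝ) < 1 + b := by linarith
  have hm : Measurable fun x : ℝ => Real.exp (-(b * x)) :=
    (measurable_id'.const_mul b).neg.exp
  rw [integral_eq_lintegral_of_nonneg_ae (Filter.Eventually.of_forall fun x => (exp_pos _).le)
      hm.aestronglyMeasurable, lintegral_exp_neg_expMeasure b hb,
    ENNReal.toReal_ofReal (by positivity)]

/-- AM-GM for `κ` nonnegative reals. -/
lemma amgm_aux {κ : ℕ} (hκ : 1 ≤ κ) (z : Fin κ → ℝ) (hz : ∀ j, 0 ≤ z j) :
    ∏ j, z j ≤ ((∑ j, z j) / κ) ^ κ := by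
  have hκ0 : (0:ℝ) < κ := by exact_mod_cast hκ
  have hG := Real.geom_mean_le_arith_mean_weighted Finset.univ (fun _ => (κ:ℝ)⁻¹) z
    (fun _ _ => by positivity)
    (by simp [Finset.sum_const, Finset.card_univ]; field_simp)
    (fun j _ => hz j)
  have hGnn : 0 ≤ ∏ j, z j ^ ((κ:ℝ)⁻¹) :=
    Finset.prod_nonneg fun j _ => Real.rpow_nonneg (hz j) _
  have hpow : (∏ j, z j ^ ((κ:ℝ)⁻¹)) ^ κ = ∏ j, z j := by
    rw [← Finset.prod_pow]
    refine Finset.prod_congr rfl fun j _ => ?_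
    rw [← Real.rpow_natCast (z j ^ ((κ:ℝ)⁻¹)) κ, ← Real.rpow_mul (hz j),
      inv_mul_cancel₀ (ne_of_gt hκ0), Real.rpow_one]
  calc ∏ j, z j = (∏ j, z j ^ ((κ:ℝ)⁻¹)) ^ κ := hpow.symm
    _ ≤ ((∑ j, z j) / κ) ^ κ := by
        apply pow_le_pow_left₀ hGnn
        calc (∏ j, z j ^ ((κ:ℝ)⁻¹)) ≤ ∑ j, (κ:ℝ)⁻¹ * z j := hG
          _ = (∑ j, z j) / κ := by rw [← Finset.mul_sum]; ring

end Aux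

/-- **Lomax-type SIR CDF upper bound (Theorem 1, eq. (8)).** For independent rate-1
exponential gains, signal power `s = p₀λ₀ > 0` and interference powers `c i = pᵢλᵢ > 0`,
`ℙ[s h₀ < γ ∑ᵢ cᵢ hᵢ] ≤ 1 - (1 + γ (∑ᵢ cᵢ)/(κ s))^(-κ)`. -/
theorem sir_cdf_upper_bound {Ω : Type*} [MeasurableSpace Ω] (P : Measure Ω)
    [IsProbabilityMeasure P]
    (κ : ℕ) (hκ : 1 ≤ κ) (h : Fin (κ + 1) → Ω → ℝ) (hmeas : ∀ i, Measurable (h i))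
    (hindep : iIndepFun h P)
    (hexp : ∀ i, Measure.map (h i) P = expMeasure 1)
    (s : ℝ) (hs : 0 < s) (c : Fin κ → ℝ) (hc : ∀ i, 0 < c i)
    (γ : ℝ) (hγ : 0 ≤ γ) :
    (P {ω | s * h 0 ω < γ * ∑ i : Fin κ, c i * h i.succ ω}).toReal
      ≤ 1 - (1 + γ * (∑ i : Fin κ, c i) / (κ * s)) ^ (-(κ : ℤ)) := by
  classical
  haveI : IsProbabilityMeasure (expMeasure 1) := isProbabilityMeasure_expMeasure one_pos
  set a : ℝ := γ / s with ha_def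
  have ha : 0 ≤ a := div_nonneg hγ hs.le
  have hκ0 : (0:ℝ) < κ := by exact_mod_cast hκ
  -- the scaled family
  set d : Fin (κ + 1) → ℝ := Fin.cases 1 c with hd_def
  set X : Fin (κ + 1) → Ω → ℝ := fun i => (fun x => d i * x) ∘ h i with hX_def
  have hXmeas : ∀ i, Measurable (X i) := fun i => (measurable_id.const_mul (d i)).comp (hmeas i)
  have hXindep : iIndepFun X P :=
    hindep.comp (fun i x => d i * x) (fun i => measurable_id.const_mul (d i))
  set T : Ω → ℝ := fun ω => ∑ j : Fin κ, c j * h j.succ ω with hT_def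
  have hTmeas : Measurable T :=
    Finset.measurable_sum _ fun j _ => (hmeas j.succ).const_mul (c j)
  set sset : Finset (Fin (κ + 1)) := Finset.univ.image Fin.succ with hsset_def
  have h0sset : (0 : Fin (κ+1)) ∉ sset := by
    simp [hsset_def, Fin.succ_ne_zero, eq_comm]
  have hTsum : (∑ i ∈ sset, X i) = T := by
    funext ω
    rw [Finset.sum_apply, hsset_def,
      Finset.sum_image (fun x _ y _ hxy => Fin.succ_injective _ hxy)]
    exact Finset.sum_congr rfl fun j _ => by simp [hX_def, hd_def]
  have hX0 : X 0 = h 0 := by funext ω; simp [hX_def, hd_def]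
  -- independence of h 0 and T
  have hiT : IndepFun (h 0) T P := by
    have := (hXindep.indepFun_finsetSum_of_notMem hXmeas h0sset).symm
    rwa [hTsum, hX0] at this
  -- each h i is a.e. nonnegative
  have hExpIio : expMeasure 1 (Set.Iio 0) = 0 := by
    rw [expMeasure_eq, withDensity_apply _ measurableSet_Iio]
    exact lintegral_exponentialPDF_of_nonpos le_rfl
  have hpos : ∀ i, ∀ᵐ ω ∂P, 0 ≤ h i ω := by
    intro i
    rw [ae_iff]
    have : {ω | ¬ 0 ≤ h i ω} = (h i) ⁻¹' (Set.Iio 0) := by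
      ext ω; simp [Set.mem_Iio, not_le]
    rw [this, ← Measure.map_apply (hmeas i) measurableSet_Iio, hexp i, hExpIio]
  have hT0 : ∀ᵐ ω ∂P, 0 ≤ T ω := by
    filter_upwards [ae_all_iff.mpr hpos] with ω hω
    exact Finset.sum_nonneg fun j _ => mul_nonneg (hc j).le (hω j.succ)
  -- rewrite the event
  have hset : {ω | s * h 0 ω < γ * ∑ i : Fin κ, c i * h i.succ ω}
      = {ω | h 0 ω < a * T ω} := by
    ext ω
    simp only [Set.mem_setOf_eq, hT_def, ha_def]
    rw [div_mul_eq_mul_div, lt_div_iff₀ hs, mul_comm (h 0 ω) s]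
  rw [hset]
  -- key quantity
  set L : ℝ≥0∞ := ∫⁻ ω, ENNReal.ofReal (Real.exp (-(a * T ω))) ∂P with hL_def
  have hLmeas : Measurable fun t : ℝ => ENNReal.ofReal (Real.exp (-(a * t))) :=
    (measurable_id.const_mul a).neg.exp.ennreal_ofReal
  -- the law of T
  set ν : Measure ℝ := P.map T with hν_def
  haveI : IsProbabilityMeasure ν := Measure.isProbabilityMeasure_map hTmeas.aemeasurable
  have hν0 : ∀ᵐ t ∂ν, 0 ≤ t := by
    rw [hν_def, ae_map_iff hTmeas.aemeasurable measurableSet_Ici]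
    exact hT0
  -- main bound : P(event) ≤ 1 - L
  have hmain : P {ω | h 0 ω < a * T ω} ≤ 1 - L := by
    have hB : MeasurableSet {p : ℝ × ℝ | p.1 < a * p.2} :=
      measurableSet_lt measurable_fst (measurable_snd.const_mul a)
    have hmap : P.map (fun ω => (h 0 ω, T ω)) = (expMeasure 1).prod ν := by
      have := (indepFun_iff_map_prod_eq_prod_map_map (hmeas 0).aemeasurable
        hTmeas.aemeasurable).mp hiT
      rw [this, hexp 0, hν_def]
    have hPA : P {ω | h 0 ω < a * T ω}
        = ∫⁻ t, expMeasure 1 (Set.Iio (a * t)) ∂ν := by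
      have h1 : P {ω | h 0 ω < a * T ω}
          = P.map (fun ω => (h 0 ω, T ω)) {p : ℝ × ℝ | p.1 < a * p.2} := by
        rw [Measure.map_apply ((hmeas 0).prodMk hTmeas) hB]
        rfl
      rw [h1, hmap, Measure.prod_apply_symm hB]
      rfl
    rw [hPA]
    have hbound : ∀ᵐ t ∂ν, expMeasure 1 (Set.Iio (a * t))
        ≤ 1 - ENNReal.ofReal (Real.exp (-(a * t))) := by
      filter_upwards [hν0] with t ht
      have hat : 0 ≤ a * t := mul_nonneg ha ht
      calc expMeasure 1 (Set.Iio (a * t)) ≤ expMeasure 1 (Set.Iic (a * t)) :=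
            measure_mono Set.Iio_subset_Iic_self
        _ = ∫⁻ y in Set.Iic (a * t), exponentialPDF 1 y := by
            rw [expMeasure_eq, withDensity_apply _ measurableSet_Iic]
        _ = ENNReal.ofReal (1 - Real.exp (-(a * t))) := by
            rw [lintegral_exponentialPDF_eq_antiDeriv zero_lt_one, if_pos hat, one_mul]
        _ = 1 - ENNReal.ofReal (Real.exp (-(a * t))) := by
            rw [ENNReal.ofReal_sub _ (Real.exp_pos _).le, ENNReal.ofReal_one]
    calc ∫⁻ t, expMeasure 1 (Set.Iio (a * t)) ∂ν
        ≤ ∫⁻ t, (1 - ENNReal.ofReal (Real.exp (-(a * t)))) ∂ν := lintegral_mono_ae hbound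
      _ = 1 - L := by
          have hle : (fun t => ENNReal.ofReal (Real.exp (-(a * t)))) ≤ᵐ[ν]
              (fun _ => (1:ℝ≥0∞)) := by
            filter_upwards [hν0] with t ht
            exact ENNReal.ofReal_le_one.mpr (Real.exp_le_one_iff.mpr (by nlinarith))
          have hfin : ∫⁻ t, ENNReal.ofReal (Real.exp (-(a * t))) ∂ν ≠ ⊤ := by
            refine ne_top_of_le_ne_top (by simp : (1:ℝ≥0∞) ≠ ⊤) ?_
            calc ∫⁻ t, ENNReal.ofReal (Real.exp (-(a * t))) ∂ν
                ≤ ∫⁻ _, 1 ∂ν := lintegral_mono_ae hle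
              _ = 1 := by simp
          have hsub := lintegral_sub hLmeas hfin hle
          simp only [lintegral_const, one_mul, measure_univ] at hsub
          rw [hsub, show L = ∫⁻ t, ENNReal.ofReal (Real.exp (-(a * t))) ∂ν from
            (lintegral_map hLmeas hTmeas).symm]
  -- L ≤ 1
  have hL1 : L ≤ 1 := by
    calc L ≤ ∫⁻ _, 1 ∂P := lintegral_mono_ae (by
          filter_upwards [hT0] with ω hω
          exact ENNReal.ofReal_le_one.mpr (Real.exp_le_one_iff.mpr (by nlinarith)))
      _ = 1 := by simp
  -- L.toReal = mgf T P (-a)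
  have hLreal : L.toReal = mgf T P (-a) := by
    rw [mgf]
    simp_rw [neg_mul]
    rw [integral_eq_lintegral_of_nonneg_ae (f := fun ω => Real.exp (-(a * T ω)))
      (Filter.Eventually.of_forall fun ω => (Real.exp_pos _).le)
      (((hTmeas.const_mul a).neg.exp : Measurable fun ω => Real.exp (-(a * T ω))).aestronglyMeasurable)]
  -- mgf product formula
  have hmgf : mgf T P (-a) = ∏ j : Fin κ, (1 + a * c j)⁻¹ := by
    rw [← hTsum, hXindep.mgf_sum hXmeas sset, hsset_def,
      Finset.prod_image (fun x _ y _ hxy => Fin.succ_injective _ hxy)]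
    refine Finset.prod_congr rfl fun j _ => ?_
    have hXj : X j.succ = fun ω => c j * h j.succ ω := by funext ω; simp [hX_def, hd_def]
    rw [hXj, mgf]
    have : ∀ ω, Real.exp (-a * (c j * h j.succ ω))
        = Real.exp (-((a * c j) * h j.succ ω)) := fun ω => by ring_nf
    simp_rw [this]
    have hm : Measurable fun x : ℝ => Real.exp (-(a * c j * x)) :=
      (measurable_id'.const_mul (a * c j)).neg.exp
    rw [← integral_exp_neg_expMeasure (a * c j) (mul_nonneg ha (hc j).le), ← hexp j.succ,
      integral_map (hmeas j.succ).aemeasurable hm.aestronglyMeasurable]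
  -- final inequality
  have hq : (1 + γ * (∑ i : Fin κ, c i) / (κ * s)) ^ (-(κ:ℤ))
      ≤ ∏ j : Fin κ, (1 + a * c j)⁻¹ := by
    set q : ℝ := γ * (∑ i : Fin κ, c i) / (κ * s) with hq_def
    have hcs : 0 ≤ ∑ i : Fin κ, c i := Finset.sum_nonneg fun i _ => (hc i).le
    have hq0 : 0 ≤ q := by positivity
    have h1q : (0:ℝ) < 1 + q := by linarith
    have hsum : (∑ j : Fin κ, (1 + a * c j)) / κ = 1 + q := by
      have h1 : (∑ j : Fin κ, (1 + a * c j)) = κ + a * ∑ j : Fin κ, c j := by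
        rw [Finset.sum_add_distrib, Finset.sum_const, Finset.card_univ, Fintype.card_fin,
          nsmul_eq_mul, mul_one, ← Finset.mul_sum]
      rw [h1, hq_def, ha_def, div_eq_iff (ne_of_gt hκ0)]
      field_simp
    have hprod_le : ∏ j : Fin κ, (1 + a * c j) ≤ (1 + q) ^ κ := by
      calc ∏ j : Fin κ, (1 + a * c j)
          ≤ ((∑ j : Fin κ, (1 + a * c j)) / κ) ^ κ :=
            amgm_aux hκ _ (fun j => by have := mul_nonneg ha (hc j).le; linarith)
        _ = (1 + q) ^ κ := by rw [hsum]
      -- done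
    have hprod_pos : 0 < ∏ j : Fin κ, (1 + a * c j) :=
      Finset.prod_pos fun j _ => by have := mul_nonneg ha (hc j).le; linarith
    rw [zpow_neg, zpow_natCast, Finset.prod_inv_distrib]
    exact inv_anti₀ hprod_pos hprod_le
  -- put everything together
  have htoReal : (P {ω | h 0 ω < a * T ω}).toReal ≤ 1 - L.toReal := by
    have h1 : (P {ω | h 0 ω < a * T ω}).toReal ≤ ((1:ℝ≥0∞) - L).toReal :=
      ENNReal.toReal_mono (ne_top_of_le_ne_top (by simp) tsub_le_self) hmain
    rwa [ENNReal.toReal_sub_of_le hL1 (by simp), ENNReal.toReal_one] at h1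
  have : (1 + γ * (∑ i : Fin κ, c i) / (κ * s)) ^ (-(κ:ℤ)) ≤ L.toReal := by
    rw [hLreal, hmgf]; exact hq
  linarith
end

section
/- Fix a real κ > 0 and an integer M ≥ 1. Let φ₁, …, φ_M be independent random variables on a probability space (Ω, ℙ), each Lomax distributed with shape κ and scale 1, i.e. each with law having density f(t) = κ (1 + t)^{−κ−1} for t ≥ 0 (and 0 for t < 0). Then for every x ≥ 0, ℙ[ Σ_{j=1}^{M} φ_j < x ] ≤ 1 − (1/(M−1)!) ∫_{Mκ ln(1 + x/M)}^{∞} t^{M−1} e^{−t} dt. -/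
open MeasureTheory ProbabilityTheory Real Set
open scoped ENNReal


noncomputable def Bpoly (n : ℕ) (t : ℝ) : ℝ := ∑ k ∈ Finset.range n, t ^ k / (k.factorial : ℝ)

lemma continuous_Bpoly (n : ℕ) : Continuous (Bpoly n) := by
  unfold Bpoly; fun_prop

lemma hasDerivAt_Bpoly (m : ℕ) (t : ℝ) : HasDerivAt (Bpoly (m+1)) (Bpoly m t) t := by
  induction m with
  | zero =>
      have : Bpoly 1 = fun _ : ℝ => (1:ℝ) := by
        funext u; simp [Bpoly]
      rw [this]
      simpa [Bpoly] using hasDerivAt_const t (1:ℝ)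
  | succ m ih =>
      have h1 : Bpoly (m+2) = fun u => Bpoly (m+1) u + u ^ (m+1) / ((m+1).factorial : ℝ) := by
        funext u; simp [Bpoly, Finset.sum_range_succ]
      rw [h1]
      have h2 := ih.add ((hasDerivAt_pow (m+1) t).div_const ((m+1).factorial : ℝ))
      convert h2 using 1
      · rfl
      · rfl
      · rfl
      have : Bpoly (m+1) t = Bpoly m t + t ^ m / (m.factorial : ℝ) := by
        simp [Bpoly, Finset.sum_range_succ]
      rw [this, Nat.factorial_succ]
      have hm : ((m.factorial : ℝ)) ≠ 0 := Nat.cast_ne_zero.mpr m.factorial_ne_zero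
      push_cast
      field_simp

lemma Bpoly_le_exp {n : ℕ} {t : ℝ} (ht : 0 ≤ t) : Bpoly n t ≤ Real.exp t :=
  Real.sum_le_exp_of_nonneg ht n

lemma Bpoly_nonneg {n : ℕ} {t : ℝ} (ht : 0 ≤ t) : 0 ≤ Bpoly n t := by
  unfold Bpoly; positivity

lemma hasDerivAt_A (n : ℕ) (t : ℝ) :
    HasDerivAt (fun u => Real.exp (-u) * Bpoly (n+1) u)
      (-(t ^ n * Real.exp (-t) / (n.factorial : ℝ))) t := by
  have hexp : HasDerivAt (fun u : ℝ => Real.exp (-u)) (-Real.exp (-t)) t := by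
    simpa using (hasDerivAt_neg t).exp
  have h := hexp.mul (hasDerivAt_Bpoly n t)
  convert h using 1
  · rfl
  · rfl
  · rfl
  have : Bpoly (n+1) t = Bpoly n t + t ^ n / (n.factorial : ℝ) := by
    simp [Bpoly, Finset.sum_range_succ]
  rw [this]
  ring

lemma tail_integral (n : ℕ) {y : ℝ} (hy : 0 ≤ y) :
    ∫ t in Set.Ici y, t ^ n * Real.exp (-t)
      = (n.factorial : ℝ) * (Real.exp (-y) * Bpoly (n+1) y) := by
  rw [MeasureTheory.integral_Ici_eq_integral_Ioi]
  have hfact : (0:ℝ) < (n.factorial : ℝ) := by positivity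
  have hderiv : ∀ t ∈ Set.Ici y,
      HasDerivAt (fun u => -((n.factorial : ℝ) * (Real.exp (-u) * Bpoly (n+1) u)))
        (t ^ n * Real.exp (-t)) t := by
    intro t _
    have h := (((hasDerivAt_A n t).const_mul ((n.factorial : ℝ)))).neg
    convert h using 1
    · rfl
    · rfl
    · rfl
    field_simp
  have hpos : ∀ t ∈ Set.Ioi y, 0 ≤ t ^ n * Real.exp (-t) := by
    intro t ht
    have : (0:ℝ) ≤ t := le_of_lt (lt_of_le_of_lt hy ht)
    positivity
  have htend : Filter.Tendsto (fun u => -((n.factorial : ℝ) * (Real.exp (-u) * Bpoly (n+1) u)))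
      Filter.atTop (nhds 0) := by
    have h1 : Filter.Tendsto (fun u : ℝ => Real.exp (-u) * Bpoly (n+1) u)
        Filter.atTop (nhds 0) := by
      have : (fun u : ℝ => Real.exp (-u) * Bpoly (n+1) u)
          = fun u => ∑ k ∈ Finset.range (n+1), (u ^ k * Real.exp (-u)) / (k.factorial : ℝ) := by
        funext u; rw [Bpoly, Finset.mul_sum]; congr 1; funext k; ring
      rw [this]
      have h2 : Filter.Tendsto
          (fun u : ℝ => ∑ k ∈ Finset.range (n+1), (u ^ k * Real.exp (-u)) / (k.factorial : ℝ))
          Filter.atTop (nhds (∑ k ∈ Finset.range (n+1), 0)) := by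
        apply tendsto_finset_sum
        intro k _
        simpa using (tendsto_pow_mul_exp_neg_atTop_nhds_zero k).div_const (k.factorial : ℝ)
      simpa using h2
    simpa using (h1.const_mul ((n.factorial : ℝ))).neg
  have := MeasureTheory.integral_Ioi_of_hasDerivAt_of_nonneg'
    (fun t ht => hderiv t ht) hpos htend
  rw [this]
  ring


lemma expMeasure_Iic (c : ℝ) :
    (volume.withDensity (exponentialPDF 1)) (Iic c)
      = ENNReal.ofReal (if 0 ≤ c then 1 - Real.exp (-c) else 0) := by
  rw [withDensity_apply _ measurableSet_Iic, lintegral_exponentialPDF_eq_antiDeriv one_pos]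
  simp

lemma map_log_lomax {Ω : Type*} [MeasurableSpace Ω] (P : Measure Ω) [IsProbabilityMeasure P]
    {κ : ℝ} (hκ : 0 < κ) {f : Ω → ℝ} (hf : Measurable f)
    (hl : Measure.map f P
      = volume.withDensity fun t => ENNReal.ofReal
          (if 0 ≤ t then κ * (1 + t) ^ (-κ - 1) else 0)) :
    Measure.map (fun ω => κ * Real.log (1 + f ω)) P
      = volume.withDensity (exponentialPDF 1) := by
  have hg : Measurable (fun t : ℝ => κ * Real.log (1 + t)) :=
    ((measurable_const.add measurable_id).log).const_mul κ
  have hmap : Measure.map (fun ω => κ * Real.log (1 + f ω)) P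
      = Measure.map (fun t : ℝ => κ * Real.log (1 + t)) (Measure.map f P) := by
    rw [Measure.map_map hg hf]; rfl
  have : IsProbabilityMeasure (Measure.map (fun ω => κ * Real.log (1 + f ω)) P) :=
    Measure.isProbabilityMeasure_map (hg.comp hf).aemeasurable
  apply Measure.ext_of_Iic
  intro c
  classical
  rw [hmap, Measure.map_apply hg measurableSet_Iic, hl,
    withDensity_apply _ (hg measurableSet_Iic), expMeasure_Iic]
  set A : Set ℝ := (fun t : ℝ => κ * Real.log (1 + t)) ⁻¹' Iic c with hA
  set dens : ℝ → ℝ≥0∞ :=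
    (fun t => ENNReal.ofReal (if 0 ≤ t then κ * (1 + t) ^ (-κ - 1) else 0)) with hdens
  have hdens0 : ∀ t < (0:ℝ), dens t = 0 := by
    intro t ht; simp [hdens, not_le.mpr ht]
  -- restrict to A ∩ Ici 0
  have hsub : ∫⁻ t in A, dens t = ∫⁻ t in A ∩ Ici 0, dens t := by
    rw [← lintegral_indicator (hg measurableSet_Iic),
      ← lintegral_indicator ((hg measurableSet_Iic).inter measurableSet_Ici)]
    congr 1
    funext t
    by_cases h0 : (0:ℝ) ≤ t
    · by_cases hAt : t ∈ A <;> simp [Set.indicator, hAt, h0]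
    · rw [Set.indicator_apply, Set.indicator_apply]
      push_neg at h0
      by_cases hAt : t ∈ A <;> simp [hAt, h0.not_ge, hdens0 t h0]
  rw [hsub]
  set T : ℝ := Real.exp (c / κ) - 1 with hT
  have h1T : 1 + T = Real.exp (c / κ) := by rw [hT]; ring
  clear_value T
  have hAI : A ∩ Ici 0 = Icc 0 T := by
    ext t
    simp only [hA, Set.mem_inter_iff, Set.mem_preimage, Set.mem_Iic, Set.mem_Ici, Set.mem_Icc]
    constructor
    · rintro ⟨h1, h2⟩
      refine ⟨h2, ?_⟩
      have hlog : Real.log (1 + t) ≤ c / κ := (le_div_iff₀' hκ).mpr h1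
      have : 1 + t ≤ Real.exp (c / κ) := by
        rw [← Real.exp_log (by linarith : (0:ℝ) < 1 + t)]
        exact Real.exp_le_exp.mpr hlog
      linarith [this, hT]
    · rintro ⟨h1, h2⟩
      refine ⟨?_, h1⟩
      have h1t : (0:ℝ) < 1 + t := by linarith
      have : Real.log (1 + t) ≤ c / κ := by
        rw [← Real.log_exp (c / κ)]
        exact Real.log_le_log h1t (by linarith [hT])
      calc κ * Real.log (1 + t) ≤ κ * (c / κ) :=
            mul_le_mul_of_nonneg_left this hκ.le
        _ = c := by field_simp
  rw [hAI]
  by_cases hc : 0 ≤ c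
  · have hT0 : 0 ≤ T := by
      have : (1:ℝ) ≤ Real.exp (c / κ) := Real.one_le_exp (by positivity)
      simp only [hT]; linarith
    have hcong : ∫⁻ t in Icc 0 T, dens t
        = ∫⁻ t in Icc 0 T, ENNReal.ofReal (κ * (1 + t) ^ (-κ - 1)) := by
      apply setLIntegral_congr_fun measurableSet_Icc
      intro t ht
      simp [hdens, ht.1]
    rw [hcong]
    have hcontOn : ContinuousOn (fun t : ℝ => κ * (1 + t) ^ (-κ - 1)) (Icc 0 T) := by
      apply ContinuousOn.mul continuousOn_const
      apply ContinuousOn.rpow_const ((continuous_const.add continuous_id').continuousOn)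
      intro t ht
      exact Or.inl (by simp only [Set.mem_Icc] at ht; show (1:ℝ) + t ≠ 0; nlinarith [ht.1])
    have hint : IntegrableOn (fun t : ℝ => κ * (1 + t) ^ (-κ - 1)) (Icc 0 T) :=
      hcontOn.integrableOn_Icc
    rw [← ofReal_integral_eq_lintegral_ofReal hint]
    swap
    · apply (ae_restrict_iff' measurableSet_Icc).mpr
      filter_upwards with t ht
      have : (0:ℝ) < 1 + t := by simp only [Set.mem_Icc] at ht; linarith [ht.1]
      positivity
    -- compute the integral
    have hIval : ∫ t in Icc 0 T, κ * (1 + t) ^ (-κ - 1) = 1 - Real.exp (-c) := by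
      rw [integral_Icc_eq_integral_Ioc, ← intervalIntegral.integral_of_le hT0]
      have hderiv : ∀ t ∈ Set.uIcc (0:ℝ) T,
          HasDerivAt (fun u : ℝ => -((1 + u) ^ (-κ))) (κ * (1 + t) ^ (-κ - 1)) t := by
        intro t ht
        rw [Set.uIcc_of_le hT0] at ht
        have h1t : (1:ℝ) + t ≠ 0 := by
          simp only [Set.mem_Icc] at ht; nlinarith [ht.1]
        have hbase : HasDerivAt (fun u : ℝ => 1 + u) 1 t := by
          simpa using (hasDerivAt_id t).const_add (1:ℝ)
        have h := (hbase.rpow_const (p := -κ) (Or.inl h1t)).neg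
        convert h using 1
        · rfl
        · rfl
        · rfl
        ring_nf
      have hii : IntervalIntegrable (fun t : ℝ => κ * (1 + t) ^ (-κ - 1)) volume 0 T := by
        apply ContinuousOn.intervalIntegrable
        rwa [Set.uIcc_of_le hT0]
      rw [intervalIntegral.integral_eq_sub_of_hasDerivAt hderiv hii]
      have hpow : (1 + T) ^ (-κ) = Real.exp (-c) := by
        rw [h1T, Real.rpow_def_of_pos (Real.exp_pos _), Real.log_exp]
        congr 1
        field_simp
      have h10 : ((1:ℝ)+0) ^ (-κ) = 1 := by norm_num [Real.one_rpow]
      rw [hpow, h10]; ring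
    rw [hIval, if_pos hc]
  · have hTneg : T < 0 := by
      have : Real.exp (c / κ) < 1 := by
        apply Real.exp_lt_one_iff.mpr
        push_neg at hc
        exact div_neg_of_neg_of_pos hc hκ
      simp only [hT]; linarith
    rw [Set.Icc_eq_empty (by linarith)]
    simp [hc]

noncomputable def Fcdf (n : ℕ) (y : ℝ) : ℝ :=
  if 0 ≤ y then 1 - Real.exp (-y) * Bpoly n y else 0

lemma measurable_Fcdf (n : ℕ) : Measurable (Fcdf n) := by
  unfold Fcdf
  exact Measurable.ite measurableSet_Ici
    ((measurable_const.sub (((measurable_id.neg.exp)).mul (continuous_Bpoly n).measurable)))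
    measurable_const

lemma Fcdf_nonneg (n : ℕ) (y : ℝ) : 0 ≤ Fcdf n y := by
  unfold Fcdf
  split_ifs with h
  · have h1 : Real.exp (-y) * Bpoly n y ≤ Real.exp (-y) * Real.exp y :=
      mul_le_mul_of_nonneg_left (Bpoly_le_exp h) (Real.exp_nonneg _)
    rw [← Real.exp_add] at h1
    simp at h1
    linarith
  · exact le_refl 0

lemma Fcdf_le_one (n : ℕ) (y : ℝ) : Fcdf n y ≤ 1 := by
  unfold Fcdf
  split_ifs with h
  · have hB : 0 ≤ Bpoly n y := by
      unfold Bpoly; positivity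
    nlinarith [Real.exp_pos (-y)]
  · norm_num

lemma key_lintegral (n : ℕ) (y : ℝ) :
    ∫⁻ u, (exponentialPDF 1 u) * ENNReal.ofReal (Fcdf n (y - u))
      = ENNReal.ofReal (Fcdf (n+1) y) := by
  have hrw : ∀ u : ℝ, (exponentialPDF 1 u) * ENNReal.ofReal (Fcdf n (y - u))
      = ENNReal.ofReal ((if 0 ≤ u then Real.exp (-u) else 0) * Fcdf n (y - u)) := by
    intro u
    rw [exponentialPDF_eq]
    rw [← ENNReal.ofReal_mul (by positivity)]
    congr 2
    split_ifs <;> simp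
  simp_rw [hrw]
  set h : ℝ → ℝ := fun u => (if 0 ≤ u then Real.exp (-u) else 0) * Fcdf n (y - u) with hh
  by_cases hy : 0 ≤ y
  · set g : ℝ → ℝ := fun u => Real.exp (-u) * Fcdf n (y - u) with hg
    have hind : h = Set.indicator (Icc 0 y) g := by
      funext u
      rw [Set.indicator_apply]
      by_cases h0 : 0 ≤ u
      · by_cases h1 : u ≤ y
        · simp [hh, hg, h0, Set.mem_Icc.mpr ⟨h0, h1⟩]
        · push_neg at h1
          have : Fcdf n (y - u) = 0 := by unfold Fcdf; rw [if_neg (by linarith)]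
          simp [hh, hg, h0, this, Set.mem_Icc, h1.not_ge]
      · simp [hh, Set.mem_Icc, h0]
    have hgmeas : Measurable g := by
      apply Measurable.mul (measurable_id.neg.exp)
      exact (measurable_Fcdf n).comp (measurable_const.sub measurable_id)
    have hint : Integrable h := by
      rw [hind]
      apply (IntegrableOn.integrable_indicator · measurableSet_Icc)
      apply Measure.integrableOn_of_bounded (M := 1) (by simp) hgmeas.aestronglyMeasurable
      apply (ae_restrict_iff' measurableSet_Icc).mpr
      filter_upwards with u hu
      rw [Set.mem_Icc] at hu
      have h1 : Real.exp (-u) ≤ 1 := Real.exp_le_one_iff.mpr (by linarith [hu.1])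
      have h2 : 0 ≤ Fcdf n (y - u) := Fcdf_nonneg n _
      have h3 : Fcdf n (y - u) ≤ 1 := Fcdf_le_one n _
      have h4 : 0 ≤ Real.exp (-u) * Fcdf n (y - u) := mul_nonneg (Real.exp_nonneg _) h2
      have h5 : Real.exp (-u) * Fcdf n (y - u) ≤ 1 := by nlinarith
      simpa [hg, Real.norm_eq_abs, abs_mul, abs_of_nonneg (Real.exp_nonneg (-u)), abs_of_nonneg h2] using h5
    have hnn : 0 ≤ᵐ[volume] h := by
      filter_upwards with u
      rw [hh]
      have := Fcdf_nonneg n (y - u)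
      positivity
    rw [← ofReal_integral_eq_lintegral_ofReal hint hnn]
    congr 1
    rw [hind, integral_indicator measurableSet_Icc, integral_Icc_eq_integral_Ioc,
      ← intervalIntegral.integral_of_le hy]
    -- now compute ∫ u in 0..y, g u
    have hcongr : ∀ u ∈ Set.uIcc 0 y, g u = Real.exp (-u) - Real.exp (-y) * Bpoly n (y - u) := by
      intro u hu
      rw [Set.uIcc_of_le hy, Set.mem_Icc] at hu
      have hyu : 0 ≤ y - u := by linarith [hu.2]
      rw [hg]
      show Real.exp (-u) * Fcdf n (y - u) = _
      unfold Fcdf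
      rw [if_pos hyu]
      have hexp2 : Real.exp (-u) * Real.exp (-(y - u)) = Real.exp (-y) := by
        rw [← Real.exp_add]; congr 1; ring
      rw [mul_sub, mul_one, ← mul_assoc, hexp2]
    rw [intervalIntegral.integral_congr hcongr]
    have hi1 : IntervalIntegrable (fun u : ℝ => Real.exp (-u)) volume 0 y := by
      apply Continuous.intervalIntegrable; fun_prop
    have hi2 : IntervalIntegrable (fun u : ℝ => Real.exp (-y) * Bpoly n (y - u)) volume 0 y := by
      apply Continuous.intervalIntegrable
      exact continuous_const.mul ((continuous_Bpoly n).comp (continuous_const.sub continuous_id))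
    rw [intervalIntegral.integral_sub hi1 hi2]
    have e1 : ∫ u in (0:ℝ)..y, Real.exp (-u) = 1 - Real.exp (-y) := by
      rw [intervalIntegral.integral_comp_neg (fun u : ℝ => Real.exp u)]
      rw [integral_exp]
      simp
    have e2 : ∫ u in (0:ℝ)..y, Real.exp (-y) * Bpoly n (y - u)
        = Real.exp (-y) * ∑ k ∈ Finset.range n, y ^ (k+1) / ((k+1).factorial : ℝ) := by
      rw [intervalIntegral.integral_const_mul]
      congr 1
      rw [intervalIntegral.integral_comp_sub_left (Bpoly n) y]
      have hb : ∫ u in (y - y)..(y - 0), Bpoly n u = ∫ u in (0:ℝ)..y, Bpoly n u := by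
        norm_num
      rw [hb]
      unfold Bpoly
      rw [intervalIntegral.integral_finset_sum]
      swap
      · intro k _
        apply Continuous.intervalIntegrable; fun_prop
      apply Finset.sum_congr rfl
      intro k _
      rw [intervalIntegral.integral_div, integral_pow]
      rw [Nat.factorial_succ]
      have hk : ((k.factorial : ℝ)) ≠ 0 := Nat.cast_ne_zero.mpr k.factorial_ne_zero
      field_simp
      push_cast; rw [zero_pow (Nat.succ_ne_zero k)]; ring
    rw [e1, e2]
    unfold Fcdf
    rw [if_pos hy]
    unfold Bpoly
    rw [Finset.sum_range_succ']
    simp only [pow_zero, Nat.factorial_zero, Nat.cast_one]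
    ring
  · have h0 : h = fun _ => 0 := by
      funext u
      rw [hh]
      by_cases h0u : 0 ≤ u
      · have : Fcdf n (y - u) = 0 := by unfold Fcdf; rw [if_neg (by linarith)]
        simp [this]
      · simp [h0u]
    have hz : ∀ u : ℝ, ((if 0 ≤ u then Real.exp (-u) else 0) * Fcdf n (y - u)) = 0 := by
      intro u
      by_cases h0u : 0 ≤ u
      · have : Fcdf n (y - u) = 0 := by unfold Fcdf; rw [if_neg (by linarith)]
        simp [this]
      · simp [h0u]
    simp_rw [hz]
    have : Fcdf (n+1) y = 0 := by unfold Fcdf; rw [if_neg hy]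
    simp [this]

lemma sum_exp_cdf {Ω : Type*} [MeasurableSpace Ω] (P : Measure Ω) [IsProbabilityMeasure P]
    {ι : Type*} (ψ : ι → Ω → ℝ) (hmeas : ∀ j, Measurable (ψ j))
    (hindep : iIndepFun ψ P)
    (hlaw : ∀ j, Measure.map (ψ j) P = volume.withDensity (exponentialPDF 1))
    {s : Finset ι} (hs : s.Nonempty) :
    ∀ y : ℝ, P ((∑ j ∈ s, ψ j) ⁻¹' Iic y) = ENNReal.ofReal (Fcdf s.card y) := by
  induction hs using Finset.Nonempty.cons_induction with
  | singleton i =>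
      intro y
      rw [Finset.sum_singleton, ← Measure.map_apply (hmeas i) measurableSet_Iic, hlaw i,
        expMeasure_Iic]
      congr 1
      simp [Fcdf, Bpoly]
  | cons i s hi hs ih =>
      intro y
      rw [Finset.sum_cons, Finset.card_cons]
      have hT : Measurable (∑ j ∈ s, ψ j) := by
        have := Finset.measurable_sum s (fun j (_ : j ∈ s) => hmeas j)
        convert this using 1
        funext a
        exact Finset.sum_apply a s ψ
      have hXT : IndepFun (ψ i) (∑ j ∈ s, ψ j) P :=
        (hindep.indepFun_finset_sum_of_notMem hmeas hi).symm
      have hmapprod : P.map (fun ω => (ψ i ω, (∑ j ∈ s, ψ j) ω))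
          = (P.map (ψ i)).prod (P.map (∑ j ∈ s, ψ j)) :=
        (indepFun_iff_map_prod_eq_prod_map_map (hmeas i).aemeasurable hT.aemeasurable).mp hXT
      have hsetm : MeasurableSet {p : ℝ × ℝ | p.1 + p.2 ≤ y} :=
        measurableSet_le (measurable_fst.add measurable_snd) measurable_const
      have hpre : (ψ i + ∑ j ∈ s, ψ j) ⁻¹' Iic y
          = (fun ω => (ψ i ω, (∑ j ∈ s, ψ j) ω)) ⁻¹' {p : ℝ × ℝ | p.1 + p.2 ≤ y} := rfl
      rw [hpre, ← Measure.map_apply ((hmeas i).prodMk hT) hsetm, hmapprod,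
        Measure.prod_apply hsetm]
      have hslice : ∀ u : ℝ,
          (Prod.mk u ⁻¹' {p : ℝ × ℝ | p.1 + p.2 ≤ y}) = Iic (y - u) := by
        intro u; ext v
        simp only [Set.mem_preimage, Set.mem_setOf_eq, Set.mem_Iic]
        constructor <;> intro h <;> linarith
      have hTlaw : ∀ z : ℝ, P.map (∑ j ∈ s, ψ j) (Iic z) = ENNReal.ofReal (Fcdf s.card z) := by
        intro z
        rw [Measure.map_apply hT measurableSet_Iic]
        exact ih z
      simp_rw [hslice, hTlaw]
      rw [hlaw i]
      have hEm : Measurable (exponentialPDF 1) := (measurable_exponentialPDFReal 1).ennreal_ofReal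
      have hGm : Measurable (fun u : ℝ => ENNReal.ofReal (Fcdf s.card (y - u))) :=
        ((measurable_Fcdf s.card).comp (measurable_const.sub measurable_id)).ennreal_ofReal
      rw [lintegral_withDensity_eq_lintegral_mul _ hEm hGm]
      have : ∀ u : ℝ, (exponentialPDF 1 * fun u => ENNReal.ofReal (Fcdf s.card (y - u))) u
          = exponentialPDF 1 u * ENNReal.ofReal (Fcdf s.card (y - u)) := fun _ => rfl
      simp_rw [this]
      exact key_lintegral s.card y

/-- **Upper bound on the CDF of a sum of Lomax variables (Theorem 3, eqs. (24)–(25)).**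
If `φ₁, …, φ_M` are independent Lomax(shape `κ`, scale `1`) random variables (density
`κ (1+t)^(-κ-1)` on `[0,∞)`), then for `x ≥ 0`,
`ℙ[∑ⱼ φⱼ < x] ≤ 1 - Γ(M, Mκ ln(1 + x/M))/(M-1)!`. -/
theorem lomax_sum_cdf_upper_bound {Ω : Type*} [MeasurableSpace Ω] (P : Measure Ω)
    [IsProbabilityMeasure P]
    (κ : ℝ) (hκ : 0 < κ) (M : ℕ) (hM : 1 ≤ M) (φ : Fin M → Ω → ℝ)
    (hmeas : ∀ j, Measurable (φ j))
    (hindep : iIndepFun φ P)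
    (hlomax : ∀ j, Measure.map (φ j) P
      = volume.withDensity fun t => ENNReal.ofReal
          (if 0 ≤ t then κ * (1 + t) ^ (-κ - 1) else 0))
    (x : ℝ) (hx : 0 ≤ x) :
    (P {ω | ∑ j : Fin M, φ j ω < x}).toReal
      ≤ 1 - (1 / (M - 1).factorial)
          * ∫ t in Set.Ici (M * κ * Real.log (1 + x / M)), t ^ (M - 1) * Real.exp (-t) := by
  have hMpos : (0:ℝ) < M := by exact_mod_cast hM
  set y : ℝ := (M:ℝ) * κ * Real.log (1 + x / M) with hy_def
  have hlog0 : 0 ≤ Real.log (1 + x / M) := by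
    apply Real.log_nonneg
    have : 0 ≤ x / M := by positivity
    linarith
  have hy : 0 ≤ y := by rw [hy_def]; positivity
  -- the transformed variables
  set ψ : Fin M → Ω → ℝ := fun j ω => κ * Real.log (1 + φ j ω) with hψ_def
  have hψmeas : ∀ j, Measurable (ψ j) := fun j =>
    (((measurable_const.add (hmeas j)).log).const_mul κ)
  have hψindep : iIndepFun ψ P :=
    hindep.comp (fun _ t => κ * Real.log (1 + t))
      (fun _ => ((measurable_const.add measurable_id).log).const_mul κ)
  have hψlaw : ∀ j, Measure.map (ψ j) P = volume.withDensity (exponentialPDF 1) :=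
    fun j => map_log_lomax P hκ (hmeas j) (hlomax j)
  -- negativity events are null
  have hnull : ∀ j, P {ω | φ j ω < 0} = 0 := by
    intro j
    have : {ω | φ j ω < 0} = φ j ⁻¹' (Iio 0) := rfl
    rw [this, ← Measure.map_apply (hmeas j) measurableSet_Iio, hlomax j,
      withDensity_apply _ measurableSet_Iio]
    have hzero : ∀ᵐ t ∂(volume.restrict (Iio 0)),
        ENNReal.ofReal (if 0 ≤ t then κ * (1 + t) ^ (-κ - 1) else 0) = 0 := by
      refine (ae_restrict_iff' measurableSet_Iio).mpr (ae_of_all _ fun t ht => ?_)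
      rw [Set.mem_Iio] at ht
      simp [not_le.mpr ht]
    rw [lintegral_congr_ae hzero, lintegral_zero]
  have hN : P (⋃ j, {ω | φ j ω < 0}) = 0 := measure_iUnion_null hnull
  -- event inclusion
  have hsub : {ω | ∑ j : Fin M, φ j ω < x}
      ⊆ ((∑ j : Fin M, ψ j) ⁻¹' Iic y) ∪ (⋃ j, {ω | φ j ω < 0}) := by
    intro ω hω
    simp only [Set.mem_setOf_eq] at hω
    by_cases hpos : ∀ j, 0 ≤ φ j ω
    · left
      have hmem : ∀ j : Fin M, (1 + φ j ω) ∈ Set.Ioi (0:ℝ) := by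
        intro j; have := hpos j; simp only [Set.mem_Ioi]; linarith
      have hw : ∑ _j : Fin M, (M:ℝ)⁻¹ = 1 := by
        rw [Finset.sum_const, Finset.card_univ, Fintype.card_fin, nsmul_eq_mul]
        field_simp
      have hjen := (strictConcaveOn_log_Ioi.concaveOn).le_map_sum
        (t := Finset.univ) (w := fun _ : Fin M => (M:ℝ)⁻¹)
        (p := fun j => 1 + φ j ω)
        (fun _ _ => by positivity) hw (fun j _ => hmem j)
      simp only [smul_eq_mul] at hjen
      have harg : ∑ j : Fin M, (M:ℝ)⁻¹ * (1 + φ j ω) = 1 + (∑ j : Fin M, φ j ω) / M := by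
        rw [← Finset.mul_sum, Finset.sum_add_distrib, Finset.sum_const, Finset.card_univ,
          Fintype.card_fin, nsmul_eq_mul, mul_one]
        field_simp
      rw [harg] at hjen
      have hsumpos : (0:ℝ) < 1 + (∑ j : Fin M, φ j ω) / M := by
        have h1 : 0 ≤ ∑ j : Fin M, φ j ω := Finset.sum_nonneg (fun j _ => hpos j)
        positivity
      have hlog2 : Real.log (1 + (∑ j : Fin M, φ j ω) / M) ≤ Real.log (1 + x / M) := by
        apply Real.log_le_log hsumpos
        have hdiv : (∑ j : Fin M, φ j ω) / M ≤ x / M :=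
          div_le_div_of_nonneg_right hω.le hMpos.le
        linarith
      have hL : (M:ℝ)⁻¹ * (∑ j : Fin M, Real.log (1 + φ j ω)) ≤ Real.log (1 + x / M) := by
        rw [Finset.mul_sum]
        exact hjen.trans hlog2
      have hfinal : (∑ j : Fin M, ψ j) ω ≤ y := by
        have happ : (∑ j : Fin M, ψ j) ω = ∑ j : Fin M, κ * Real.log (1 + φ j ω) :=
          Finset.sum_apply ω Finset.univ ψ
        rw [happ, hy_def]
        have h2 : ∑ j : Fin M, κ * Real.log (1 + φ j ω)
            = (κ * M) * ((M:ℝ)⁻¹ * (∑ j : Fin M, Real.log (1 + φ j ω))) := by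
          rw [← Finset.mul_sum]
          field_simp
        rw [h2]
        calc (κ * M) * ((M:ℝ)⁻¹ * (∑ j : Fin M, Real.log (1 + φ j ω)))
            ≤ (κ * M) * Real.log (1 + x / M) :=
              mul_le_mul_of_nonneg_left hL (by positivity)
          _ = (M:ℝ) * κ * Real.log (1 + x / M) := by ring
      exact hfinal
    · right
      push_neg at hpos
      obtain ⟨j, hj⟩ := hpos
      exact Set.mem_iUnion.mpr ⟨j, hj⟩
  -- probability bound
  have : Nonempty (Fin M) := ⟨⟨0, hM⟩⟩
  have hcdf := sum_exp_cdf P ψ hψmeas hψindep hψlaw (Finset.univ_nonempty) y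
  rw [Finset.card_univ, Fintype.card_fin] at hcdf
  have hub : P {ω | ∑ j : Fin M, φ j ω < x} ≤ ENNReal.ofReal (Fcdf M y) := by
    calc P {ω | ∑ j : Fin M, φ j ω < x}
        ≤ P (((∑ j : Fin M, ψ j) ⁻¹' Iic y) ∪ (⋃ j, {ω | φ j ω < 0})) := measure_mono hsub
      _ ≤ P ((∑ j : Fin M, ψ j) ⁻¹' Iic y) + P (⋃ j, {ω | φ j ω < 0}) := measure_union_le _ _
      _ = ENNReal.ofReal (Fcdf M y) := by rw [hN, hcdf, add_zero]
  have hlhs : (P {ω | ∑ j : Fin M, φ j ω < x}).toReal ≤ Fcdf M y := by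
    have := ENNReal.toReal_mono ENNReal.ofReal_ne_top hub
    rwa [ENNReal.toReal_ofReal (Fcdf_nonneg M y)] at this
  refine hlhs.trans (le_of_eq ?_)
  -- RHS equality
  have htail := tail_integral (M - 1) hy
  have hM1 : (M - 1) + 1 = M := Nat.succ_pred_eq_of_pos hM
  rw [hM1] at htail
  rw [htail]
  have hfac : ((M-1).factorial : ℝ) ≠ 0 := Nat.cast_ne_zero.mpr (M-1).factorial_ne_zero
  unfold Fcdf
  rw [if_pos hy]
  field_simp
end

section
/- For every integer n ≥ 1 and every real x ≥ 0, (1 − exp(−(n!)^{−1/n} x))^{n} ≤ 1 − (1/(n−1)!) ∫_{x}^{∞} t^{n−1} e^{−t} dt. -/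
open Real MeasureTheory Set Filter Topology

lemma exp_segment {t s : ℝ} (ht0 : 0 ≤ t) (ht1 : t ≤ 1) : exp (t * s) ≤ 1 - t + t * exp s := by
  have h := convexOn_exp.2 (Set.mem_univ (0:ℝ)) (Set.mem_univ s)
    (by linarith : (0:ℝ) ≤ 1 - t) ht0 (by ring)
  simpa using h

lemma rho_nonneg {δ γ : ℝ} {c v : ℝ} (hc : 0 < c) (hcv : c ≤ v)
    (h : 0 ≤ exp (δ * c) + γ * c - 1) : 0 ≤ exp (δ * v) + γ * v - 1 := by
  have hv : 0 < v := lt_of_lt_of_le hc hcv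
  have ht0 : 0 ≤ c / v := by positivity
  have ht1 : c / v ≤ 1 := div_le_one_of_le₀ hcv hv.le
  have key := exp_segment (s := δ * v) ht0 ht1
  have htv : c / v * v = c := div_mul_cancel₀ c hv.ne'
  rw [show c / v * (δ * v) = δ * (c / v * v) by ring, htv] at key
  have htpos : 0 < c / v := by positivity
  have hgc : c / v * (γ * v) = γ * c := by
    rw [show c/v*(γ*v) = γ*(c/v*v) by ring, htv]
  have h2 : 0 ≤ (c / v) * (exp (δ * v) + γ * v - 1) := by nlinarith [key, h, hgc]
  nlinarith [h2, htpos]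

section
variable (m : ℕ) (α : ℝ)

noncomputable def ff : ℝ → ℝ := fun t => t ^ m * exp (-t)
noncomputable def FF : ℝ → ℝ := fun y => ∫ t in (0:ℝ)..y, ff m t
noncomputable def GG : ℝ → ℝ := fun y => (m.factorial : ℝ) * (1 - exp (-(α * y))) ^ (m+1)
noncomputable def dd : ℝ → ℝ := fun y => ff m y - (1/α^m) * exp (-(α*y)) * (1 - exp (-(α*y)))^m

lemma ff_cont : Continuous (ff m) := by
  unfold ff; fun_prop

lemma FF_deriv (y : ℝ) : HasDerivAt (FF m) (ff m y) y := by
  refine intervalIntegral.integral_hasDerivAt_right ((ff_cont m).intervalIntegrable _ _)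
    ((ff_cont m).stronglyMeasurableAtFilter _ _) (ff_cont m).continuousAt

lemma GG_deriv (hα : 0 < α) (hrel : α ^ (m+1) * ((m+1).factorial : ℝ) = 1) (y : ℝ) :
    HasDerivAt (GG m α) ((1/α^m) * exp (-(α*y)) * (1 - exp (-(α*y)))^m) y := by
  have h1 : HasDerivAt (fun z : ℝ => -(α * z)) (-α) y := by
    simpa using ((hasDerivAt_id y).const_mul α).fun_neg
  have h2 : HasDerivAt (fun z : ℝ => 1 - exp (-(α * z))) (exp (-(α*y)) * α) y := by
    simpa using (h1.exp.const_sub 1)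
  have h3 := (h2.pow (m+1)).const_mul (m.factorial : ℝ)
  refine h3.congr_deriv (Eq.symm ?_)
  have hαm : (α:ℝ)^m ≠ 0 := by positivity
  have hfact : ((m+1).factorial : ℝ) = (m.factorial : ℝ) * (m+1) := by
    rw [Nat.factorial_succ]; push_cast; ring
  have : (1/α^m) = (m.factorial : ℝ) * (m+1) * α := by
    rw [← hfact]
    field_simp
    linear_combination -hrel
  rw [this]
  push_cast
  ring
end

section
variable (m : ℕ) (α : ℝ)

noncomputable def gam : ℝ := (1 - α) / m
noncomputable def psi : ℝ → ℝ := fun z => α * z * exp (-(gam m α * z)) - 1 + exp (-(α * z))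
noncomputable def rr : ℝ → ℝ := fun z => exp ((gam m α - α) * z) + gam m α * z - 1

lemma psi_deriv (z : ℝ) :
    HasDerivAt (psi m α) (-(α * exp (-(gam m α * z)) * rr m α z)) z := by
  set g := gam m α with hg
  have h1 : HasDerivAt (fun z : ℝ => α * z) α z := by
    simpa using (hasDerivAt_id z).const_mul α
  have h2 : HasDerivAt (fun z : ℝ => exp (-(g * z))) (exp (-(g * z)) * (-g)) z := by
    have : HasDerivAt (fun z : ℝ => -(g * z)) (-g) z := by
      simpa using ((hasDerivAt_id z).const_mul g).fun_neg
    simpa using this.exp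
  have h3 : HasDerivAt (fun z : ℝ => exp (-(α * z))) (exp (-(α * z)) * (-α)) z := by
    have : HasDerivAt (fun z : ℝ => -(α * z)) (-α) z := by
      simpa using ((hasDerivAt_id z).const_mul α).fun_neg
    simpa using this.exp
  have h4 := ((h1.mul h2).sub_const 1).add h3
  refine h4.congr_deriv (Eq.symm ?_)
  have he : exp (-(g * z)) * exp ((g - α) * z) = exp (-(α * z)) := by
    rw [← Real.exp_add]; congr 1; ring
  unfold rr
  rw [← hg]
  linear_combination (-α) * he

lemma psi_zero : psi m α 0 = 0 := by unfold psi; simp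

lemma psi_cross (hα : 0 < α) {u v : ℝ} (hu : 0 < u) (huv : u ≤ v)
    (hpu : psi m α u ≤ 0) : psi m α v ≤ 0 := by
  have hdiff : Differentiable ℝ (psi m α) := fun z => (psi_deriv m α z).differentiableAt
  obtain ⟨c, hc, hceq⟩ := exists_hasDerivAt_eq_slope (psi m α)
    (fun z => -(α * exp (-(gam m α * z)) * rr m α z)) hu
    hdiff.continuous.continuousOn (fun z _ => psi_deriv m α z)
  have hslope : (psi m α u - psi m α 0) / (u - 0) ≤ 0 := by
    rw [psi_zero]
    apply div_nonpos_of_nonpos_of_nonneg <;> simp [hpu, hu.le]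
  rw [← hceq] at hslope
  have hrc : 0 ≤ rr m α c := by
    have hepos : 0 < α * exp (-(gam m α * c)) := by positivity
    nlinarith [hslope, hepos]
  -- deriv nonpos on Ici c
  have hanti : AntitoneOn (psi m α) (Set.Ici c) := by
    apply antitoneOn_of_deriv_nonpos (convex_Ici c) hdiff.continuous.continuousOn
      (fun z _ => (hdiff z).differentiableWithinAt)
    intro z hz
    rw [interior_Ici] at hz
    rw [(psi_deriv m α z).deriv]
    have hrz : 0 ≤ rr m α z := by
      have := rho_nonneg (δ := gam m α - α) (γ := gam m α) hc.1 (le_of_lt hz)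
      unfold rr at *
      exact this (by simpa [mul_comm] using hrc)
    have : 0 ≤ α * exp (-(gam m α * z)) := by positivity
    nlinarith [hrz, this]
  have h1 : psi m α v ≤ psi m α u :=
    hanti (le_of_lt hc.2) (le_trans (le_of_lt hc.2) huv) huv
  linarith

lemma dd_psi (hm : 1 ≤ m) (hα : 0 < α) {z : ℝ} (hz : 0 < z) :
    (dd m α z ≤ 0 ↔ psi m α z ≤ 0) := by
  have hm0 : (m:ℝ) ≠ 0 := Nat.cast_ne_zero.mpr (by omega)
  have hmg : (m:ℝ) * gam m α = 1 - α := by unfold gam; field_simp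
  have hP0 : 0 ≤ α * z * exp (-(gam m α * z)) := by positivity
  have hQ0 : 0 ≤ 1 - exp (-(α * z)) := by
    have h1 : (0:ℝ) < α * z := mul_pos hα hz
    have h2 : exp (-(α * z)) ≤ 1 := Real.exp_le_one_iff.mpr (by linarith)
    linarith
  have hPm : (α * z * exp (-(gam m α * z))) ^ m = α^m * z^m * (exp (-z) * exp (α*z)) := by
    rw [mul_pow, mul_pow, ← Real.exp_nat_mul,
      show (m:ℝ) * -(gam m α * z) = -z + α*z by linear_combination (-z) * hmg,
      Real.exp_add]
  have hαm : α ^ m ≠ 0 := by positivity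
  have h1 : exp (-(α * z)) * exp (α * z) = 1 := by rw [← Real.exp_add]; simp
  have h2 : α^m * (1/α^m) * (exp (-(α * z)) * exp (α * z)) = 1 := by
    rw [h1]; field_simp
  have hid : α^m * exp (α*z) * dd m α z
      = (α * z * exp (-(gam m α * z))) ^ m - (1 - exp (-(α * z))) ^ m := by
    unfold dd ff
    linear_combination (-1:ℝ) * hPm - (1 - exp (-(α * z)))^m * h2
  have hpos : 0 < α^m * exp (α*z) := by positivity
  have hmne : m ≠ 0 := by omega
  have hpsi : psi m α z = α * z * exp (-(gam m α * z)) - (1 - exp (-(α * z))) := by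
    unfold psi; ring
  constructor
  · intro h
    have hPQ : (α * z * exp (-(gam m α * z))) ^ m ≤ (1 - exp (-(α * z))) ^ m := by
      nlinarith [hid, mul_nonpos_of_nonneg_of_nonpos hpos.le h]
    have := (pow_le_pow_iff_left₀ hP0 hQ0 hmne).mp hPQ
    rw [hpsi]; linarith
  · intro h
    have hPQ : α * z * exp (-(gam m α * z)) ≤ 1 - exp (-(α * z)) := by
      rw [hpsi] at h; linarith
    have h3 : (α * z * exp (-(gam m α * z))) ^ m ≤ (1 - exp (-(α * z))) ^ m :=
      pow_le_pow_left₀ hP0 hPQ m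
    have h4 : α^m * exp (α*z) * dd m α z ≤ 0 := by rw [hid]; linarith
    nlinarith [h4, hpos]

end

lemma integrable_pow_exp (m : ℕ) : IntegrableOn (fun t : ℝ => t ^ m * Real.exp (-t)) (Set.Ioi 0) := by
  have h := Real.GammaIntegral_convergent (s := m+1) (by positivity)
  refine h.congr_fun ?_ measurableSet_Ioi
  intro t ht
  simp only [show (m+1:ℝ) - 1 = (m:ℝ) by ring, Real.rpow_natCast]
  ring

lemma integral_pow_exp (m : ℕ) : ∫ t in Set.Ioi (0:ℝ), t ^ m * Real.exp (-t) = m.factorial := by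
  have h := Real.Gamma_eq_integral (s := m+1) (by positivity)
  rw [Real.Gamma_nat_eq_factorial m] at h
  rw [h]
  refine (setIntegral_congr_fun measurableSet_Ioi (fun t ht => ?_)).symm
  rw [show (m+1:ℝ) - 1 = (m:ℝ) by ring, Real.rpow_natCast]
  ring

lemma key_ineq (m : ℕ) (hm : 1 ≤ m) (α : ℝ) (hα : 0 < α)
    (hrel : α ^ (m+1) * ((m+1).factorial : ℝ) = 1) {x : ℝ} (hx : 0 ≤ x) :
    (m.factorial : ℝ) * (1 - exp (-(α * x))) ^ (m+1) ≤ ∫ t in (0:ℝ)..x, t ^ m * exp (-t) := by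
  suffices h : 0 ≤ FF m x - GG m α x by
    unfold FF GG ff at h; linarith
  by_contra hcon
  push_neg at hcon
  have hDd : ∀ y, HasDerivAt (fun y => FF m y - GG m α y) (dd m α y) y := by
    intro y
    have h := (FF_deriv m y).sub (GG_deriv m α hα hrel y)
    unfold dd
    exact h
  have hDdiff : Differentiable ℝ (fun y => FF m y - GG m α y) :=
    fun y => (hDd y).differentiableAt
  have hD0 : FF m 0 - GG m α 0 = (0:ℝ) := by unfold FF GG; simp
  have hxpos : 0 < x := by
    rcases eq_or_lt_of_le hx with rfl | h
    · simp [hD0] at hcon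
    · exact h
  obtain ⟨c, hc, hceq⟩ := exists_hasDerivAt_eq_slope (fun y => FF m y - GG m α y) (dd m α)
    hxpos hDdiff.continuous.continuousOn (fun y _ => hDd y)
  have hdc : dd m α c ≤ 0 := by
    rw [hceq, hD0]
    apply div_nonpos_of_nonpos_of_nonneg <;> [skip; linarith]
    linarith
  have hanti : AntitoneOn (fun y => FF m y - GG m α y) (Set.Ici c) := by
    apply antitoneOn_of_deriv_nonpos (convex_Ici c) hDdiff.continuous.continuousOn
      (fun y _ => (hDdiff y).differentiableWithinAt)
    intro y hy
    rw [interior_Ici] at hy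
    rw [(hDd y).deriv]
    have h1 : psi m α c ≤ 0 := (dd_psi m α hm hα hc.1).mp hdc
    have h2 := psi_cross m α hα hc.1 (le_of_lt hy) h1
    exact (dd_psi m α hm hα (lt_trans hc.1 hy)).mpr h2
  have hFlim : Tendsto (FF m) atTop (𝓝 (m.factorial:ℝ)) := by
    have h := intervalIntegral_tendsto_integral_Ioi 0 (integrable_pow_exp m) tendsto_id
    rw [integral_pow_exp m] at h
    exact h
  have hexp : Tendsto (fun y : ℝ => exp (-(α*y))) atTop (𝓝 0) := by
    apply Real.tendsto_exp_atBot.comp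
    exact tendsto_neg_atBot_iff.mpr ((tendsto_const_mul_atTop_of_pos hα).mpr tendsto_id)
  have hGlim : Tendsto (GG m α) atTop (𝓝 (m.factorial:ℝ)) := by
    have h1 : Tendsto (fun y : ℝ => (1 - exp (-(α*y)))^(m+1)) atTop (𝓝 ((1 - (0:ℝ))^(m+1))) :=
      (tendsto_const_nhds.sub hexp).pow (m+1)
    have h2 := h1.const_mul (m.factorial:ℝ)
    simp at h2
    exact h2
  have hDlim : Tendsto (fun y => FF m y - GG m α y) atTop (𝓝 0) := by
    simpa using hFlim.sub hGlim
  have hev : ∀ᶠ y in atTop, (fun y => FF m y - GG m α y) y ≤ FF m x - GG m α x := by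
    filter_upwards [eventually_ge_atTop x] with y hy
    exact hanti (le_of_lt hc.2) (le_trans (le_of_lt hc.2) hy) hy
  have := le_of_tendsto hDlim hev
  linarith

/-- **Incomplete gamma lower bound (DLMF 8.10.11; eq. (20) of the paper).** For `n ≥ 1`
and `x ≥ 0`, `(1 - exp(-(n!)^(-1/n) x))^n ≤ 1 - Γ(n,x)/(n-1)!` where
`Γ(n, x) = ∫_x^∞ t^(n-1) e^(-t) dt`. -/
theorem regularized_gamma_lower_bound (n : ℕ) (hn : 1 ≤ n) (x : ℝ) (hx : 0 ≤ x) :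
    (1 - Real.exp (-((n.factorial : ℝ) ^ (-(1 / (n : ℝ))) * x))) ^ n
      ≤ 1 - (1 / (n - 1).factorial)
          * ∫ t in Set.Ici x, t ^ (n - 1) * Real.exp (-t) := by
  obtain ⟨m, rfl⟩ : ∃ m, n = m + 1 := ⟨n - 1, (Nat.succ_pred_eq_of_pos hn).symm⟩
  simp only [Nat.add_sub_cancel]
  rcases Nat.eq_zero_or_pos m with rfl | hm1
  · -- n = 1 case
    rw [integral_Ici_eq_integral_Ioi]
    rw [show ∫ t in Set.Ioi x, t ^ (0:ℕ) * Real.exp (-t) = ∫ t in Set.Ioi x, Real.exp (-t) by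
      simp, integral_exp_neg_Ioi]
    have h1 : (((0+1 : ℕ).factorial : ℕ) : ℝ) ^ (-(1 / (((0+1:ℕ)) : ℝ))) = 1 := by
      norm_num
    rw [h1]
    norm_num
  · set α : ℝ := (((m+1).factorial : ℝ)) ^ (-(1 / (((m+1):ℕ) : ℝ))) with hαdef
    have hfacpos : (0:ℝ) < ((m+1).factorial : ℝ) := by positivity
    have hα : 0 < α := Real.rpow_pos_of_pos hfacpos _
    have hm1' : ((m:ℝ) + 1) ≠ 0 := by positivity
    have hrel : α ^ (m+1) * ((m+1).factorial : ℝ) = 1 := by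
      rw [hαdef, ← Real.rpow_natCast (((m+1).factorial : ℝ) ^ (-(1 / (((m+1):ℕ) : ℝ)))) (m+1),
        ← Real.rpow_mul hfacpos.le,
        show (-(1 / (((m+1):ℕ) : ℝ))) * (((m+1):ℕ) : ℝ) = -1 by push_cast; field_simp,
        Real.rpow_neg_one]
      exact inv_mul_cancel₀ (ne_of_gt hfacpos)
    have hsplit : (∫ t in Set.Ici x, t ^ m * Real.exp (-t))
        = (m.factorial : ℝ) - ∫ t in (0:ℝ)..x, t ^ m * Real.exp (-t) := by
      rw [integral_Ici_eq_integral_Ioi, intervalIntegral.integral_of_le hx]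
      have hu : Set.Ioc 0 x ∪ Set.Ioi x = Set.Ioi (0:ℝ) := Set.Ioc_union_Ioi_eq_Ioi hx
      have h1 : IntegrableOn (fun t : ℝ => t ^ m * Real.exp (-t)) (Set.Ioc 0 x) :=
        (integrable_pow_exp m).mono_set Set.Ioc_subset_Ioi_self
      have h2 : IntegrableOn (fun t : ℝ => t ^ m * Real.exp (-t)) (Set.Ioi x) :=
        (integrable_pow_exp m).mono_set (Set.Ioi_subset_Ioi hx)
      have := setIntegral_union Set.Ioc_disjoint_Ioi_same measurableSet_Ioi h1 h2
      rw [hu, integral_pow_exp m] at this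
      linarith [this]
    rw [hsplit]
    have hfpos : (0:ℝ) < (m.factorial : ℝ) := by positivity
    have hkey := key_ineq m hm1 α hα hrel hx
    rw [show (1:ℝ) - (1 / (m.factorial : ℝ))
        * ((m.factorial : ℝ) - ∫ t in (0:ℝ)..x, t ^ m * Real.exp (-t))
        = (∫ t in (0:ℝ)..x, t ^ m * Real.exp (-t)) / (m.factorial : ℝ) by field_simp; ring,
      le_div_iff₀ hfpos]
    linarith [hkey]
end

section
/- Let ω > 0, η > 0 and C > 0 be real constants. Then the function g : ℝ → ℝ defined by g(x) = ln( ln(ω e^{x} + 1) ) − ln( e^{x}/η + C ) is strictly concave on ℝ. -/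
open Real

private lemma aux_deriv1 (ω : ℝ) (hω : 0 < ω) (x : ℝ) :
    HasDerivAt (fun x : ℝ => Real.log (Real.log (ω * Real.exp x + 1)))
      (ω * Real.exp x / ((ω * Real.exp x + 1) * Real.log (ω * Real.exp x + 1))) x := by
  have hupos : (0:ℝ) < ω * Real.exp x + 1 := by nlinarith [Real.exp_pos x]
  have hL : 0 < Real.log (ω * Real.exp x + 1) :=
    Real.log_pos (by nlinarith [Real.exp_pos x])
  have h1 : HasDerivAt (fun x : ℝ => ω * Real.exp x + 1) (ω * Real.exp x) x :=
    ((Real.hasDerivAt_exp x).const_mul ω).add_const 1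
  have h2 := h1.log hupos.ne'
  have h3 := h2.log hL.ne'
  convert h3 using 1
  rw [div_div]

private lemma aux_concave (ω : ℝ) (hω : 0 < ω) :
    StrictConcaveOn ℝ Set.univ (fun x : ℝ => Real.log (Real.log (ω * Real.exp x + 1))) := by
  have hderiv : deriv (fun x : ℝ => Real.log (Real.log (ω * Real.exp x + 1)))
      = fun x => ω * Real.exp x / ((ω * Real.exp x + 1) * Real.log (ω * Real.exp x + 1)) :=
    funext fun x => (aux_deriv1 ω hω x).deriv
  apply strictConcaveOn_univ_of_deriv2_neg
  · exact (Differentiable.continuous fun x => (aux_deriv1 ω hω x).differentiableAt)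
  · intro x
    have hNpos : (0:ℝ) < ω * Real.exp x := mul_pos hω (Real.exp_pos x)
    have hupos : (0:ℝ) < ω * Real.exp x + 1 := by linarith
    have hL : 0 < Real.log (ω * Real.exp x + 1) := Real.log_pos (by linarith)
    have hN : HasDerivAt (fun x : ℝ => ω * Real.exp x) (ω * Real.exp x) x :=
      (Real.hasDerivAt_exp x).const_mul ω
    have hu : HasDerivAt (fun x : ℝ => ω * Real.exp x + 1) (ω * Real.exp x) x :=
      hN.add_const 1
    have hD : HasDerivAt
        (fun x : ℝ => (ω * Real.exp x + 1) * Real.log (ω * Real.exp x + 1))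
        (ω * Real.exp x * Real.log (ω * Real.exp x + 1)
          + (ω * Real.exp x + 1) * (ω * Real.exp x / (ω * Real.exp x + 1))) x :=
      hu.mul (hu.log hupos.ne')
    have hden_ne : (ω * Real.exp x + 1) * Real.log (ω * Real.exp x + 1) ≠ 0 :=
      (mul_pos hupos hL).ne'
    have hφ := hN.div hD hden_ne
    have h2 : deriv^[2] (fun x : ℝ => Real.log (Real.log (ω * Real.exp x + 1))) x
        = (ω * Real.exp x * ((ω * Real.exp x + 1) * Real.log (ω * Real.exp x + 1))
            - ω * Real.exp x * (ω * Real.exp x * Real.log (ω * Real.exp x + 1)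
              + (ω * Real.exp x + 1) * (ω * Real.exp x / (ω * Real.exp x + 1))))
          / ((ω * Real.exp x + 1) * Real.log (ω * Real.exp x + 1)) ^ 2 := by
      simp only [Function.iterate_succ, Function.iterate_zero, Function.comp_apply, id_eq]
      rw [hderiv]
      exact hφ.deriv
    rw [h2]
    apply div_neg_of_neg_of_pos
    · have hcancel : (ω * Real.exp x + 1) * (ω * Real.exp x / (ω * Real.exp x + 1))
          = ω * Real.exp x := mul_div_cancel₀ _ hupos.ne'
      rw [hcancel]
      have hlog : Real.log (ω * Real.exp x + 1) < ω * Real.exp x := by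
        have := Real.log_lt_sub_one_of_pos hupos (by nlinarith)
        linarith
      nlinarith [mul_pos hNpos hL]
    · positivity

private lemma aux_deriv2 (η C : ℝ) (hη : 0 < η) (hC : 0 < C) (x : ℝ) :
    HasDerivAt (fun x : ℝ => Real.log (Real.exp x / η + C))
      (Real.exp x / η / (Real.exp x / η + C)) x := by
  have hpos : (0:ℝ) < Real.exp x / η + C := by positivity
  have h1 : HasDerivAt (fun x : ℝ => Real.exp x / η + C) (Real.exp x / η) x :=
    ((Real.hasDerivAt_exp x).div_const η).add_const C
  exact h1.log hpos.ne'

private lemma aux_convex (η C : ℝ) (hη : 0 < η) (hC : 0 < C) :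
    ConvexOn ℝ Set.univ (fun x : ℝ => Real.log (Real.exp x / η + C)) := by
  have hderiv : deriv (fun x : ℝ => Real.log (Real.exp x / η + C))
      = fun x => Real.exp x / η / (Real.exp x / η + C) :=
    funext fun x => (aux_deriv2 η C hη hC x).deriv
  have hE : ∀ x : ℝ, HasDerivAt (fun x : ℝ => Real.exp x / η) (Real.exp x / η) x :=
    fun x => (Real.hasDerivAt_exp x).div_const η
  have hpos : ∀ x : ℝ, (0:ℝ) < Real.exp x / η + C := fun x => by positivity
  have hd2 : ∀ x : ℝ, HasDerivAt (fun x => Real.exp x / η / (Real.exp x / η + C))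
      ((Real.exp x / η * (Real.exp x / η + C) - Real.exp x / η * (Real.exp x / η))
        / (Real.exp x / η + C) ^ 2) x :=
    fun x => (hE x).div ((hE x).add_const C) (hpos x).ne'
  apply convexOn_univ_of_deriv2_nonneg
  · exact fun x => (aux_deriv2 η C hη hC x).differentiableAt
  · intro x
    rw [hderiv]
    exact (hd2 x).differentiableAt
  · intro x
    have h2 : deriv^[2] (fun x : ℝ => Real.log (Real.exp x / η + C)) x
        = (Real.exp x / η * (Real.exp x / η + C) - Real.exp x / η * (Real.exp x / η))
            / (Real.exp x / η + C) ^ 2 := by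
      simp only [Function.iterate_succ, Function.iterate_zero, Function.comp_apply, id_eq]
      rw [hderiv]
      exact (hd2 x).deriv
    rw [h2]
    have hEpos : (0:ℝ) < Real.exp x / η := by positivity
    apply div_nonneg
    · nlinarith
    · positivity

/-- **Strict concavity of the log energy efficiency (proof of Theorem 2, eq. (32)).**
For `ω, η, C > 0`, the function `x ↦ ln(ln(ω e^x + 1)) - ln(e^x/η + C)` is strictly
concave on `ℝ`. -/
theorem log_energy_efficiency_strictConcave (ω η C : ℝ) (hω : 0 < ω) (hη : 0 < η)
    (hC : 0 < C) :
    StrictConcaveOn ℝ Set.univ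
      (fun x : ℝ => Real.log (Real.log (ω * Real.exp x + 1))
        - Real.log (Real.exp x / η + C)) := by
  have h := (aux_concave ω hω).sub_convexOn (aux_convex η C hη hC)
  simpa [Pi.sub_def] using h
end

section
/- Let ω > 0, η > 0 and C > 0 be real constants, define g : ℝ → ℝ by g(x) = ln( ln(ω e^{x} + 1) ) − ln( e^{x}/η + C ), and let t > 0 be a real number satisfying ω (t + η C) = (1 + ω t) ln(1 + ω t). Then g attains its global maximum over ℝ at x* = ln t, i.e. g(x) ≤ g(ln t) for all x ∈ ℝ. -/
/-- **Global optimality of the stationary point (Theorem 2).** For `ω, η, C > 0`, if `t > 0`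
satisfies `ω (t + η C) = (1 + ω t) ln(1 + ω t)`, then `g x = ln(ln(ω e^x + 1)) - ln(e^x/η + C)`
attains its global maximum over `ℝ` at `x* = ln t`. -/
theorem log_energy_efficiency_max_at_stationary (ω η C : ℝ) (hω : 0 < ω) (hη : 0 < η)
    (hC : 0 < C) (t : ℝ) (ht : 0 < t)
    (hstat : ω * (t + η * C) = (1 + ω * t) * Real.log (1 + ω * t)) :
    ∀ x : ℝ,
      Real.log (Real.log (ω * Real.exp x + 1)) - Real.log (Real.exp x / η + C)
        ≤ Real.log (Real.log (ω * Real.exp (Real.log t) + 1))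
          - Real.log (Real.exp (Real.log t) / η + C) := by
  intro x
  rw [Real.exp_log ht]
  set u := Real.exp x with hu
  have hu0 : 0 < u := Real.exp_pos x
  have hden : (0:ℝ) < 1 + ω * t := by positivity
  have hL : 0 < Real.log (1 + ω * t) := Real.log_pos (by nlinarith)
  -- log(1+ωu) - log(1+ωt) ≤ (1+ωu)/(1+ωt) - 1
  have h1 : Real.log (1 + ω * u) - Real.log (1 + ω * t)
      ≤ (1 + ω * u) / (1 + ω * t) - 1 := by
    rw [← Real.log_div (by positivity) (ne_of_gt hden)]
    exact Real.log_le_sub_one_of_pos (by positivity)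
  have key : Real.log (1 + ω * u) * (1 + ω * t)
      ≤ Real.log (1 + ω * t) * (1 + ω * t) + (ω * u - ω * t) := by
    have h2 := mul_le_mul_of_nonneg_right h1 hden.le
    have hx : ((1 + ω * u) / (1 + ω * t) - 1) * (1 + ω * t) = ω * u - ω * t := by
      field_simp
      ring
    nlinarith [h2]
  -- numerator inequality
  have h3 := mul_le_mul_of_nonneg_right key hL.le
  have hnum :
      Real.log (1 + ω * u) * (t + η * C) * ω ≤ Real.log (1 + ω * t) * (u + η * C) * ω := by
    calc Real.log (1 + ω * u) * (t + η * C) * ω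
        = Real.log (1 + ω * u) * (1 + ω * t) * Real.log (1 + ω * t) := by
          linear_combination Real.log (1 + ω * u) * hstat
      _ ≤ (Real.log (1 + ω * t) * (1 + ω * t) + (ω * u - ω * t)) * Real.log (1 + ω * t) := h3
      _ = Real.log (1 + ω * t) * (u + η * C) * ω := by
          linear_combination (-Real.log (1 + ω * t)) * hstat
  have h4 : Real.log (1 + ω * u) * (t + η * C) ≤ Real.log (1 + ω * t) * (u + η * C) :=
    le_of_mul_le_mul_right hnum hω
  have hnum' : Real.log (ω * u + 1) * (t / η + C)
      ≤ Real.log (ω * t + 1) * (u / η + C) := by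
    rw [show ω * u + 1 = 1 + ω * u from by ring, show ω * t + 1 = 1 + ω * t from by ring,
      show t / η + C = (t + η * C) / η from by field_simp,
      show u / η + C = (u + η * C) / η from by field_simp,
      ← mul_div_assoc, ← mul_div_assoc]
    gcongr
  have hA : 0 < Real.log (ω * u + 1) := Real.log_pos (by nlinarith)
  have hA' : 0 < Real.log (ω * t + 1) := Real.log_pos (by nlinarith)
  have hB : 0 < u / η + C := by positivity
  have hB' : 0 < t / η + C := by positivity
  have hm : Real.log (ω * u + 1) * (t / η + C) ≤ Real.log (ω * t + 1) * (u / η + C) := hnum'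
  have := Real.log_le_log (by positivity) hm
  rw [Real.log_mul (ne_of_gt hA) (ne_of_gt hB'), Real.log_mul (ne_of_gt hA') (ne_of_gt hB)] at this
  linarith
end

section
/- Let M ≥ 2 and κ ≥ 1 be integers and let z be a real number with 0 < z < 1 − (M!)^{−κ/M}. Then (M!)^{1/M} · (−ln(1 − z)) > κ ((1 − z)^{−1/κ} − 1). -/
/-- **Strict inequality `ω_mrc > ω_sc` (core of Lemma 6).** For integers `M ≥ 2`, `κ ≥ 1`
and `0 < z < 1 - (M!)^(-κ/M)`,
`(M!)^(1/M) · (-ln(1-z)) > κ ((1-z)^(-1/κ) - 1)`. -/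
theorem omega_mrc_gt_omega_sc (M κ : ℕ) (hM : 2 ≤ M) (hκ : 1 ≤ κ) (z : ℝ)
    (hz0 : 0 < z)
    (hz1 : z < 1 - (M.factorial : ℝ) ^ (-(κ : ℝ) / (M : ℝ))) :
    (M.factorial : ℝ) ^ ((1 : ℝ) / (M : ℝ)) * (-Real.log (1 - z))
      > (κ : ℝ) * ((1 - z) ^ (-(1 : ℝ) / (κ : ℝ)) - 1) := by
  have hMpos : (0:ℝ) < (M:ℝ) := by positivity
  have hκpos : (0:ℝ) < (κ:ℝ) := by exact_mod_cast hκ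
  have hfac2 : (2:ℝ) ≤ (M.factorial : ℝ) := by
    have := Nat.self_le_factorial M
    have : 2 ≤ M.factorial := le_trans hM this
    exact_mod_cast this
  have hfacpos : (0:ℝ) < (M.factorial : ℝ) := by linarith
  set c : ℝ := (M.factorial : ℝ) ^ ((1 : ℝ) / (M : ℝ)) with hc
  have hc1 : 1 < c :=
    Real.one_lt_rpow_iff_of_pos hfacpos |>.mpr (Or.inl ⟨by linarith, by positivity⟩)
  have hexp : (M.factorial : ℝ) ^ (-(κ : ℝ) / (M : ℝ)) = c ^ (-(κ:ℝ)) := by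
    rw [hc, ← Real.rpow_mul hfacpos.le]
    congr 1
    field_simp
  have hmpos : (0:ℝ) < (M.factorial : ℝ) ^ (-(κ : ℝ) / (M : ℝ)) := by positivity
  have h1z : 0 < 1 - z := by linarith
  set t : ℝ := (1 - z) ^ (-(1 : ℝ) / (κ : ℝ)) with ht
  have ht1 : 1 < t := by
    apply Real.one_lt_rpow_iff_of_pos h1z |>.mpr
    right
    constructor
    · linarith
    · rw [neg_div]; exact neg_neg_of_pos (by positivity)
  have ht0 : 0 < t := by linarith
  have hclt : 1 - z < 1 := by linarith
  have htc : t < c := by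
    have h1 : c ^ (-(κ:ℝ)) < 1 - z := by rw [← hexp]; linarith
    have h2 : (1 - z) ^ (-(1:ℝ)/(κ:ℝ)) < (c ^ (-(κ:ℝ))) ^ (-(1:ℝ)/(κ:ℝ)) :=
      Real.rpow_lt_rpow_of_neg (by positivity) h1
        (by rw [neg_div]; exact neg_neg_of_pos (by positivity))
    have h3 : (c ^ (-(κ:ℝ))) ^ (-(1:ℝ)/(κ:ℝ)) = c := by
      have hc0 : (0:ℝ) ≤ c := by positivity
      rw [← Real.rpow_mul hc0,
        show (-(κ:ℝ)) * (-(1:ℝ)/(κ:ℝ)) = 1 by field_simp, Real.rpow_one]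
    calc t < (c ^ (-(κ:ℝ))) ^ (-(1:ℝ)/(κ:ℝ)) := h2
      _ = c := h3
  have hlogt : Real.log t = (-(1:ℝ)/(κ:ℝ)) * Real.log (1 - z) := Real.log_rpow h1z _
  have hneglog : -Real.log (1 - z) = (κ:ℝ) * Real.log t := by
    rw [hlogt]; field_simp
  rw [hneglog]
  have hlog_lb : 1 - 1/t < Real.log t := by
    have h := Real.log_lt_sub_one_of_pos (x := 1/t) (by positivity) (by
      intro h; rw [div_eq_one_iff_eq (ne_of_gt ht0)] at h; linarith)
    rw [Real.log_div one_ne_zero (ne_of_gt ht0), Real.log_one] at h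
    linarith
  have key : c * Real.log t > t - 1 := by
    have h1 : c * (1 - 1/t) < c * Real.log t :=
      mul_lt_mul_of_pos_left hlog_lb (by linarith)
    have h2 : t - 1 ≤ c * (1 - 1/t) := by
      have hinv : t * (1/t) = 1 := mul_one_div_cancel (ne_of_gt ht0)
      nlinarith [mul_pos (sub_pos.mpr htc) (sub_pos.mpr ht1)]
    linarith
  calc (κ:ℝ) * ((1 - z) ^ (-(1:ℝ)/(κ:ℝ)) - 1) = (κ:ℝ) * (t - 1) := by rw [← ht]
    _ < (κ:ℝ) * (c * Real.log t) := by exact mul_lt_mul_of_pos_left key hκpos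
    _ = c * ((κ:ℝ) * Real.log t) := by ring
end

section
/- Let M ≥ 1 and κ ≥ 1 be integers and δ > 0 a real constant. Then the ratio R(ε) = ( δ (M!)^{1/M} (−ln(1 − ε^{1/M})) ) / ( κ δ ((1 − ε^{1/M})^{−1/κ} − 1) ) tends to (M!)^{1/M} as ε tends to 0 from the right; i.e., the limit of R(ε) along the filter of positive reals approaching 0 equals (M!)^{1/M}. -/
open Filter Topology

/-- **Asymptotic ultra-reliability gap (eq. (41)).** For `M ≥ 1`, `κ ≥ 1` and `δ > 0`, the
ratio `ω_mrc/ω_sc = (δ (M!)^(1/M) (-ln(1 - ε^(1/M)))) / (κ δ ((1 - ε^(1/M))^(-1/κ) - 1))`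
tends to `(M!)^(1/M)` as `ε → 0⁺`. -/
theorem omega_ratio_tendsto (M κ : ℕ) (hM : 1 ≤ M) (hκ : 1 ≤ κ) (δ : ℝ) (hδ : 0 < δ) :
    Tendsto
      (fun ε : ℝ =>
        (δ * (M.factorial : ℝ) ^ ((1 : ℝ) / (M : ℝ))
            * (-Real.log (1 - ε ^ ((1 : ℝ) / (M : ℝ)))))
          / ((κ : ℝ) * δ * ((1 - ε ^ ((1 : ℝ) / (M : ℝ))) ^ (-(1 : ℝ) / (κ : ℝ)) - 1)))
      (𝓝[>] 0) (𝓝 ((M.factorial : ℝ) ^ ((1 : ℝ) / (M : ℝ)))) := by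
  have hκ0 : (κ : ℝ) ≠ 0 := Nat.cast_ne_zero.mpr (by omega)
  have hM0 : (0:ℝ) < (1:ℝ) / (M:ℝ) := by
    have : (0:ℝ) < (M:ℝ) := by exact_mod_cast Nat.pos_of_ne_zero (by omega)
    positivity
  set C : ℝ := (M.factorial : ℝ) ^ ((1 : ℝ) / (M : ℝ)) with hC
  set a : ℝ := -(1 : ℝ) / (κ : ℝ) with ha
  have ha0 : a ≠ 0 := by
    rw [ha]; exact div_ne_zero (by norm_num) hκ0
  -- slope limit for rpow at 1
  have hd : HasDerivAt (fun t : ℝ => t ^ a) (a * (1:ℝ) ^ (a - 1)) 1 :=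
    Real.hasDerivAt_rpow_const (Or.inl one_ne_zero)
  have h1 : Tendsto (fun t : ℝ => (t ^ a - 1) / (t - 1)) (𝓝[≠] (1:ℝ)) (𝓝 a) := by
    have := hasDerivAt_iff_tendsto_slope.mp hd
    simp only [Real.one_rpow, mul_one] at this
    refine this.congr fun t => ?_
    rw [slope_def_field]
    simp [Real.one_rpow]
  -- slope limit for log at 1
  have hdl : HasDerivAt Real.log (1:ℝ) 1 := by
    simpa using Real.hasDerivAt_log (one_ne_zero)
  have h2 : Tendsto (fun t : ℝ => Real.log t / (t - 1)) (𝓝[≠] (1:ℝ)) (𝓝 1) := by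
    have := hasDerivAt_iff_tendsto_slope.mp hdl
    refine this.congr fun t => ?_
    rw [slope_def_field]
    simp
  -- quotient
  have h3 : Tendsto (fun t : ℝ => (t ^ a - 1) / Real.log t) (𝓝[≠] (1:ℝ)) (𝓝 a) := by
    have h := h1.div h2 one_ne_zero
    simp only [div_one] at h
    refine h.congr' ?_
    filter_upwards [self_mem_nhdsWithin] with t ht
    have ht1 : t - 1 ≠ 0 := sub_ne_zero.mpr ht
    simp only [Pi.div_apply]
    rw [div_div_div_cancel_right₀ ht1]
  have h4 : Tendsto (fun t : ℝ => Real.log t / (t ^ a - 1)) (𝓝[≠] (1:ℝ)) (𝓝 a⁻¹) := by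
    have := h3.inv₀ ha0
    refine this.congr fun t => ?_
    rw [inv_div]
  -- composition with ε ↦ 1 - ε^(1/M)
  have htend : Tendsto (fun ε : ℝ => 1 - ε ^ ((1:ℝ)/(M:ℝ))) (𝓝[>] (0:ℝ)) (𝓝[≠] (1:ℝ)) := by
    have hc : Tendsto (fun ε : ℝ => 1 - ε ^ ((1:ℝ)/(M:ℝ))) (𝓝[>] (0:ℝ)) (𝓝 1) := by
      have hrp : ContinuousAt (fun x : ℝ => x ^ ((1:ℝ)/(M:ℝ))) 0 :=
        Real.continuousAt_rpow_const 0 _ (Or.inr hM0.le)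
      have : Tendsto (fun ε : ℝ => ε ^ ((1:ℝ)/(M:ℝ))) (𝓝[>] (0:ℝ)) (𝓝 0) := by
        have h := hrp.tendsto.mono_left (nhdsWithin_le_nhds (s := Set.Ioi (0:ℝ)))
        rw [show ((0:ℝ) ^ ((1:ℝ)/(M:ℝ))) = 0 from Real.zero_rpow hM0.ne'] at h
        exact h
      have := (tendsto_const_nhds (x := (1:ℝ))).sub this
      simpa using this
    refine tendsto_nhdsWithin_of_tendsto_nhds_of_eventually_within _ hc ?_
    filter_upwards [self_mem_nhdsWithin] with ε hε
    have : (0:ℝ) < ε ^ ((1:ℝ)/(M:ℝ)) := Real.rpow_pos_of_pos hε _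
    simp only [Set.mem_compl_iff, Set.mem_singleton_iff]
    linarith
  have h5 : Tendsto
      (fun ε : ℝ => Real.log (1 - ε ^ ((1:ℝ)/(M:ℝ))) /
        ((1 - ε ^ ((1:ℝ)/(M:ℝ))) ^ a - 1)) (𝓝[>] (0:ℝ)) (𝓝 a⁻¹) :=
    h4.comp htend
  have key : Tendsto
      (fun ε : ℝ => C * a * (Real.log (1 - ε ^ ((1:ℝ)/(M:ℝ))) /
        ((1 - ε ^ ((1:ℝ)/(M:ℝ))) ^ a - 1))) (𝓝[>] (0:ℝ)) (𝓝 (C * a * a⁻¹)) :=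
    h5.const_mul _
  have hval : C * a * a⁻¹ = C := by
    rw [mul_assoc, mul_inv_cancel₀ ha0, mul_one]
  rw [hval] at key
  refine key.congr fun ε => ?_
  set L := Real.log (1 - ε ^ ((1:ℝ)/(M:ℝ)))
  set D := (1 - ε ^ ((1:ℝ)/(M:ℝ))) ^ a - 1
  rcases eq_or_ne D 0 with hD | hD
  · simp [hD]
  · rw [ha]
    field_simp
end
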